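/- Let X and Y be complex Hilbert spaces, T : X → X a bounded operator with ‖T^k‖ ≤ c₀ for all k ≥ 0, C : X → Y a bounded operator, and α > -1 a real number. Suppose there is a constant M ≥ 0 such that ∑_{k=0}^∞ (k+1)^α ‖C T^k x‖² ≤ M² ‖x‖² for all x ∈ X (α-admissibility). Let β > -1 be such that m = (α+β)/2 is a nonnegative integer. Then there exists a constant K ≥ 0 such that (1 - |ω|²)^{(1+β)/2} ‖C (I - ωT)^{-(m+1)}‖ ≤ K for all ω in the open unit disc. -/

import Mathlib

open Filter Finset Real

private lemma summable_natpow_geo (n : ℕ) {r : ℝ} (h0 : 0 ≤ r) (h1 : r < 1) :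
    Summable fun k : ℕ => ((k : ℝ) + 1) ^ n * r ^ k := by
  have hg := summable_pow_mul_geometric_of_norm_lt_one (R := ℝ) n
    (by rwa [Real.norm_eq_abs, abs_of_nonneg h0])
  have hgeo : Summable fun k : ℕ => r ^ k := summable_geometric_of_lt_one h0 h1
  have hmaj : Summable fun k : ℕ =>
      (2:ℝ)^n * ((k:ℝ)^n * r^k) + (2:ℝ)^n * r^k := (hg.mul_left _).add (hgeo.mul_left _)
  refine hmaj.of_nonneg_of_le (fun k => by positivity) (fun k => ?_)
  rcases Nat.eq_zero_or_pos k with hk | hk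
  · subst hk
    have h2 : (1:ℝ) ≤ 2^n := one_le_pow₀ (by norm_num)
    have h3 : (0:ℝ) ≤ 2^n * ((0:ℝ)^n * 1) := by positivity
    simp only [Nat.cast_zero, zero_add, pow_zero, one_pow, mul_one]
    nlinarith
  · have hk1 : (1:ℝ) ≤ (k:ℝ) := by exact_mod_cast hk
    have hb : ((k:ℝ)+1)^n ≤ 2^n * (k:ℝ)^n := by
      calc ((k:ℝ)+1)^n ≤ (2*(k:ℝ))^n := by
            apply pow_le_pow_left₀ (by positivity) (by linarith)
        _ = 2^n * (k:ℝ)^n := mul_pow _ _ _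
    have hrk : (0:ℝ) ≤ r^k := pow_nonneg h0 k
    nlinarith [mul_le_mul_of_nonneg_right hb hrk, mul_nonneg (pow_nonneg (by norm_num : (0:ℝ) ≤ 2) n) hrk]

private lemma summable_rpow_geo (β : ℝ) {r : ℝ} (h0 : 0 ≤ r) (h1 : r < 1) :
    Summable fun k : ℕ => ((k : ℝ) + 1) ^ β * r ^ k := by
  refine (summable_natpow_geo ⌈β⌉₊ h0 h1).of_nonneg_of_le
    (fun k => mul_nonneg (Real.rpow_nonneg (by positivity) _) (pow_nonneg h0 _)) (fun k => ?_)
  have h1k : (1:ℝ) ≤ (k:ℝ)+1 := by linarith [Nat.cast_nonneg (α := ℝ) k]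
  have hb : ((k:ℝ)+1)^β ≤ ((k:ℝ)+1)^(⌈β⌉₊:ℝ) :=
    Real.rpow_le_rpow_of_exponent_le h1k (Nat.le_ceil β)
  rw [Real.rpow_natCast] at hb
  exact mul_le_mul_of_nonneg_right hb (pow_nonneg h0 k)

private lemma key_rpow_diff {p x : ℝ} (hp0 : 0 < p) (hp1 : p ≤ 1) (hx : 0 ≤ x) :
    p * (x+1)^(p-1) ≤ (x+1)^p - x^p := by
  have hx1 : (0:ℝ) < x + 1 := by linarith
  have hs : -1 ≤ -(1/(x+1)) := by
    rw [neg_le_neg_iff]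
    rw [div_le_one hx1]; linarith
  have hB := rpow_one_add_le_one_add_mul_self hs hp0.le hp1
  have he : (1:ℝ) + -(1/(x+1)) = x/(x+1) := by field_simp; ring
  rw [he] at hB
  -- hB : (x/(x+1))^p ≤ 1 + p * -(1/(x+1))
  have hpow : (x/(x+1))^p = x^p / (x+1)^p := Real.div_rpow hx hx1.le p
  have hmul := mul_le_mul_of_nonneg_right hB (Real.rpow_nonneg hx1.le p)
  rw [hpow, div_mul_cancel₀ _ (ne_of_gt (Real.rpow_pos_of_pos hx1 p))] at hmul
  -- hmul : x^p ≤ (1 + p * -(1/(x+1))) * (x+1)^p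
  have hsub : (x+1)^(p-1) = (x+1)^p / (x+1) := Real.rpow_sub_one (ne_of_gt hx1) p
  have : (1 + p * -(1/(x+1))) * (x+1)^p = (x+1)^p - p * ((x+1)^p / (x+1)) := by ring
  rw [this, ← hsub] at hmul
  linarith

private lemma head_sum {β : ℝ} (hβ0 : -1 < β) (hβ1 : β ≤ 0) (N : ℕ) :
    ∑ k ∈ Finset.range N, ((k:ℝ)+1)^β ≤ (N:ℝ)^(1+β) / (1+β) := by
  have hp0 : (0:ℝ) < 1+β := by linarith
  induction N with
  | zero => simp [Real.zero_rpow (ne_of_gt hp0)]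
  | succ N ih =>
    rw [Finset.sum_range_succ]
    have hkey := key_rpow_diff hp0 (by linarith) (Nat.cast_nonneg N)
    have hexp : (1:ℝ) + β - 1 = β := by ring
    rw [hexp] at hkey
    -- hkey : (1+β) * (N+1)^β ≤ (N+1)^(1+β) - N^(1+β)
    have h2 : ((N:ℝ)+1)^β ≤ (((N:ℝ)+1)^(1+β) - (N:ℝ)^(1+β))/(1+β) := by
      rw [le_div_iff₀ hp0]; linarith
    have h3 : (N:ℝ)^(1+β)/(1+β) + (((N:ℝ)+1)^(1+β) - (N:ℝ)^(1+β))/(1+β)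
        = ((N:ℝ)+1)^(1+β)/(1+β) := by ring
    push_cast
    linarith
set_option maxHeartbeats 1000000 in
private lemma lemA_base {β : ℝ} (hβ0 : -1 < β) (hβ1 : β ≤ 0) :
    ∃ K : ℝ, 0 ≤ K ∧ ∀ r : ℝ, 0 ≤ r → r < 1 →
      (1-r)^(1+β) * ∑' k : ℕ, ((k:ℝ)+1)^β * r^k ≤ K := by
  have hp0 : (0:ℝ) < 1+β := by linarith
  refine ⟨2^(1+β) * (1/(1+β) + 1), by positivity, fun r h0 h1 => ?_⟩
  have ht0 : (0:ℝ) < 1 - r := by linarith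
  have ht1 : 1 - r ≤ 1 := by linarith
  set t : ℝ := 1 - r with htdef
  set N : ℕ := ⌈1/t⌉₊ with hNdef
  have hN1 : 1 ≤ N := Nat.one_le_ceil_iff.mpr (by positivity)
  have hNpos : (0:ℝ) < N := by exact_mod_cast hN1
  have hNt : 1/t ≤ (N:ℝ) := Nat.le_ceil _
  have h1t : (1:ℝ) ≤ 1/t := by rw [le_div_iff₀ ht0]; linarith
  have hNle : (N:ℝ) ≤ 2/t := by
    have hc := Nat.ceil_lt_add_one (le_of_lt (by positivity : (0:ℝ) < 1/t))
    have h2t : 2/t = 1/t + 1/t := by ring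
    rw [h2t]; linarith
  have hf : Summable fun k : ℕ => ((k:ℝ)+1)^β * r^k := summable_rpow_geo β h0 h1
  have hsplit := Summable.sum_add_tsum_nat_add N hf
  -- head bound
  have hhead : ∑ k ∈ Finset.range N, ((k:ℝ)+1)^β * r^k ≤ (N:ℝ)^(1+β)/(1+β) := by
    have h1 : ∑ k ∈ Finset.range N, ((k:ℝ)+1)^β * r^k ≤ ∑ k ∈ Finset.range N, ((k:ℝ)+1)^β := by
      apply Finset.sum_le_sum
      intro k _
      have hr1 : r^k ≤ 1 := pow_le_one₀ h0 h1.le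
      have h2 : (0:ℝ) ≤ ((k:ℝ)+1)^β := Real.rpow_nonneg (by positivity) β
      nlinarith
    exact h1.trans (head_sum hβ0 hβ1 N)
  -- tail bound
  have htail : ∑' k : ℕ, ((↑(k+N):ℝ)+1)^β * r^(k+N) ≤ (N:ℝ)^β * (N:ℝ) := by
    have hterm : ∀ k : ℕ, ((↑(k+N):ℝ)+1)^β * r^(k+N) ≤ (N:ℝ)^β * r^k := by
      intro k
      push_cast
      have hb : (N:ℝ) ≤ (k:ℝ)+(N:ℝ)+1 := by linarith [Nat.cast_nonneg (α := ℝ) k]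
      have h3 : ((k:ℝ)+(N:ℝ)+1)^β ≤ (N:ℝ)^β := Real.rpow_le_rpow_of_nonpos hNpos hb hβ1
      have h4 : r^(k+N) ≤ r^k := pow_le_pow_of_le_one h0 h1.le (Nat.le_add_right k N)
      exact mul_le_mul h3 h4 (pow_nonneg h0 _) (Real.rpow_nonneg hNpos.le β)
    have hsum2 : Summable fun k : ℕ => (N:ℝ)^β * r^k :=
      (summable_geometric_of_lt_one h0 h1).mul_left _
    calc ∑' k : ℕ, ((↑(k+N):ℝ)+1)^β * r^(k+N)
        ≤ ∑' k : ℕ, (N:ℝ)^β * r^k := by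
          apply Summable.tsum_le_tsum hterm _ hsum2
          exact (summable_nat_add_iff N).mpr hf
      _ = (N:ℝ)^β * (1-r)⁻¹ := by
          rw [Summable.tsum_mul_left _ (summable_geometric_of_lt_one h0 h1),
            tsum_geometric_of_lt_one h0 h1]
      _ ≤ (N:ℝ)^β * (N:ℝ) := by
          apply mul_le_mul_of_nonneg_left _ (Real.rpow_nonneg hNpos.le β)
          rw [← one_div]
          exact hNt
  have hNN : (N:ℝ)^β * (N:ℝ) = (N:ℝ)^(1+β) := by
    rw [add_comm, Real.rpow_add hNpos, Real.rpow_one]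
  have hS1 : ∑' k : ℕ, ((k:ℝ)+1)^β * r^k ≤ (N:ℝ)^(1+β) * (1/(1+β) + 1) := by
    rw [hNN] at htail
    have : (N:ℝ)^(1+β)/(1+β) + (N:ℝ)^(1+β) = (N:ℝ)^(1+β) * (1/(1+β)+1) := by ring
    linarith [hsplit, hhead, htail]
  -- final combine
  have hSnn : (0:ℝ) ≤ ∑' k : ℕ, ((k:ℝ)+1)^β * r^k :=
    tsum_nonneg fun k => mul_nonneg (Real.rpow_nonneg (by positivity) β) (pow_nonneg h0 k)
  have hmono := mul_le_mul_of_nonneg_left hS1 (Real.rpow_nonneg ht0.le (1+β))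
  have hmul : t^(1+β) * (N:ℝ)^(1+β) = (t*(N:ℝ))^(1+β) := (Real.mul_rpow ht0.le hNpos.le).symm
  have htN : t * (N:ℝ) ≤ 2 := by
    have h3 := mul_le_mul_of_nonneg_left hNle ht0.le
    rwa [show t * (2/t) = 2 from by field_simp] at h3
  have htN2 : (t*(N:ℝ))^(1+β) ≤ 2^(1+β) :=
    Real.rpow_le_rpow (by positivity) htN hp0.le
  have hc0 : (0:ℝ) ≤ 1/(1+β) + 1 := by positivity
  calc t^(1+β) * ∑' k : ℕ, ((k:ℝ)+1)^β * r^k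
      ≤ t^(1+β) * ((N:ℝ)^(1+β) * (1/(1+β) + 1)) := hmono
    _ = (t*(N:ℝ))^(1+β) * (1/(1+β) + 1) := by rw [← hmul]; ring
    _ ≤ 2^(1+β) * (1/(1+β) + 1) := mul_le_mul_of_nonneg_right htN2 hc0
private lemma diff_rpow_le {β : ℝ} (hβ : 0 < β) {x : ℝ} (hx : 1 ≤ x) :
    (x+1)^β - x^β ≤ (β + β*2^(1-β)) * (x+1)^(β-1) := by
  have hx0 : (0:ℝ) < x := lt_of_lt_of_le one_pos hx
  have hx1 : (0:ℝ) < x + 1 := by linarith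
  have hb1nn : (0:ℝ) ≤ (x+1)^(β-1) := Real.rpow_nonneg hx1.le _
  rcases le_or_gt 1 β with hb | hb
  · -- β ≥ 1 : (x+1)^β - x^β ≤ β (x+1)^{β-1}
    have hs : -1 ≤ -(1/(x+1)) := by
      rw [neg_le_neg_iff, div_le_one hx1]; linarith
    have hB := one_add_mul_self_le_rpow_one_add hs hb
    have he : (1:ℝ) + -(1/(x+1)) = x/(x+1) := by field_simp; ring
    rw [he] at hB
    -- hB : 1 + β * -(1/(x+1)) ≤ (x/(x+1))^β
    have hpow : (x/(x+1))^β = x^β / (x+1)^β := Real.div_rpow hx0.le hx1.le β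
    have hmul := mul_le_mul_of_nonneg_right hB (Real.rpow_nonneg hx1.le β)
    rw [hpow, div_mul_cancel₀ _ (ne_of_gt (Real.rpow_pos_of_pos hx1 β))] at hmul
    have hsub : (x+1)^(β-1) = (x+1)^β / (x+1) := Real.rpow_sub_one (ne_of_gt hx1) β
    have he2 : (1 + β * -(1/(x+1))) * (x+1)^β = (x+1)^β - β * ((x+1)^β / (x+1)) := by ring
    rw [he2, ← hsub] at hmul
    -- hmul : (x+1)^β - β * (x+1)^(β-1) ≤ x^β
    have h2 : (0:ℝ) ≤ β*2^(1-β) * (x+1)^(β-1) := by positivity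
    nlinarith
  · -- 0 < β < 1 : (x+1)^β ≤ x^β + β x^{β-1} and x^{β-1} ≤ 2^{1-β}(x+1)^{β-1}
    have hs : (-1:ℝ) ≤ 1/x := le_trans (by norm_num) (by positivity : (0:ℝ) ≤ 1/x)
    have hB := rpow_one_add_le_one_add_mul_self hs hβ.le hb.le
    -- (1 + 1/x)^β ≤ 1 + β * (1/x)
    have hmul := mul_le_mul_of_nonneg_right hB (Real.rpow_nonneg hx0.le β)
    have hl : (1 + 1/x)^β * x^β = (x+1)^β := by
      rw [← Real.mul_rpow (by positivity) hx0.le]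
      congr 1
      field_simp
    have hr : (1 + β * (1/x)) * x^β = x^β + β * (x^β / x) := by ring
    rw [hl, hr, ← Real.rpow_sub_one (ne_of_gt hx0)] at hmul
    -- hmul : (x+1)^β ≤ x^β + β * x^(β-1)
    have hx2 : x^(β-1) ≤ 2^(1-β) * (x+1)^(β-1) := by
      have hhalf : (x+1)/2 ≤ x := by linarith
      have h3 : x^(β-1) ≤ ((x+1)/2)^(β-1) :=
        Real.rpow_le_rpow_of_nonpos (by positivity) hhalf (by linarith)
      have h4 : ((x+1)/2)^(β-1) = (x+1)^(β-1) / 2^(β-1) :=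
        Real.div_rpow hx1.le (by norm_num) _
      have h5 : (2:ℝ)^(β-1) = (2^(1-β))⁻¹ := by
        rw [← Real.rpow_neg (by norm_num)]
        congr 1; ring
      rw [h4, h5, div_inv_eq_mul, mul_comm] at h3
      exact h3
    have h6 := mul_le_mul_of_nonneg_left hx2 hβ.le
    nlinarith

private lemma lemA_step {β : ℝ} (hβ : 0 < β) {r : ℝ} (h0 : 0 ≤ r) (h1 : r < 1) :
    (1-r) * ∑' k : ℕ, ((k:ℝ)+1)^β * r^k
      ≤ (1 + β + β*2^(1-β)) * ∑' k : ℕ, ((k:ℝ)+1)^(β-1) * r^k := by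
  set c : ℝ := 1 + β + β*2^(1-β) with hcdef
  have hc1 : (1:ℝ) ≤ c := by
    have : (0:ℝ) < 2^(1-β) := by positivity
    nlinarith
  have hf : Summable fun k : ℕ => ((k:ℝ)+1)^β * r^k := summable_rpow_geo β h0 h1
  have hg : Summable fun k : ℕ => ((k:ℝ))^β * r^k := by
    refine hf.of_nonneg_of_le
      (fun k => mul_nonneg (Real.rpow_nonneg (Nat.cast_nonneg k) β) (pow_nonneg h0 k)) (fun k => ?_)
    exact mul_le_mul_of_nonneg_right
      (Real.rpow_le_rpow (Nat.cast_nonneg k) (by linarith) hβ.le) (pow_nonneg h0 k)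
  have hshift : ∑' k : ℕ, ((k:ℝ))^β * r^k = ∑' k : ℕ, ((k:ℝ)+1)^β * r^(k+1) := by
    rw [Summable.tsum_eq_zero_add hg]
    rw [Nat.cast_zero, Real.zero_rpow (ne_of_gt hβ), zero_mul, zero_add]
    exact tsum_congr fun k => by push_cast; ring_nf
  have hrS : r * ∑' k : ℕ, ((k:ℝ)+1)^β * r^k = ∑' k : ℕ, ((k:ℝ)+1)^β * r^(k+1) := by
    rw [← Summable.tsum_mul_left r hf]
    exact tsum_congr fun k => by ring
  have hkey : (1-r) * ∑' k : ℕ, ((k:ℝ)+1)^β * r^k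
      = ∑' k : ℕ, (((k:ℝ)+1)^β * r^k - ((k:ℝ))^β * r^k) := by
    rw [Summable.tsum_sub hf hg, sub_mul, one_mul, hrS, ← hshift]
  rw [hkey]
  have hf' : Summable fun k : ℕ => ((k:ℝ)+1)^(β-1) * r^k := summable_rpow_geo (β-1) h0 h1
  have hterm : ∀ k : ℕ, ((k:ℝ)+1)^β * r^k - ((k:ℝ))^β * r^k ≤ c * (((k:ℝ)+1)^(β-1) * r^k) := by
    intro k
    cases k with
    | zero =>
      simp only [Nat.cast_zero, zero_add, Real.one_rpow, pow_zero, mul_one, one_mul]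
      rw [Real.zero_rpow (ne_of_gt hβ)]
      linarith
    | succ n =>
      have hx : (1:ℝ) ≤ (n:ℝ)+1 := by linarith [Nat.cast_nonneg (α := ℝ) n]
      have hd := diff_rpow_le hβ hx
      have hrk : (0:ℝ) ≤ r^(n+1) := pow_nonneg h0 _
      have hb1nn : (0:ℝ) ≤ ((n:ℝ)+1+1)^(β-1) := Real.rpow_nonneg (by linarith) _
      have h2 := mul_le_mul_of_nonneg_right hd hrk
      push_cast
      have h3 : (β + β*2^(1-β)) * (((n:ℝ)+1)+1)^(β-1) ≤ c * (((n:ℝ)+1)+1)^(β-1) := by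
        have : (0:ℝ) ≤ (((n:ℝ)+1)+1)^(β-1) := by positivity
        nlinarith
      nlinarith [mul_le_mul_of_nonneg_right h3 hrk]
  calc ∑' k : ℕ, (((k:ℝ)+1)^β * r^k - ((k:ℝ))^β * r^k)
      ≤ ∑' k : ℕ, c * (((k:ℝ)+1)^(β-1) * r^k) :=
        Summable.tsum_le_tsum hterm (hf.sub hg) (hf'.mul_left c)
    _ = c * ∑' k : ℕ, ((k:ℝ)+1)^(β-1) * r^k := Summable.tsum_mul_left c hf'

private lemma lemA {β : ℝ} (hβ : -1 < β) :
    ∃ K : ℝ, 0 ≤ K ∧ ∀ r : ℝ, 0 ≤ r → r < 1 →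
      (1-r)^(1+β) * ∑' k : ℕ, ((k:ℝ)+1)^β * r^k ≤ K := by
  suffices h : ∀ n : ℕ, ∀ β : ℝ, -1 < β → β ≤ n → ∃ K : ℝ, 0 ≤ K ∧ ∀ r : ℝ, 0 ≤ r → r < 1 →
      (1-r)^(1+β) * ∑' k : ℕ, ((k:ℝ)+1)^β * r^k ≤ K by
    exact h ⌈β⌉₊ β hβ (Nat.le_ceil β)
  intro n
  induction n with
  | zero => exact fun β h0 h1 => lemA_base h0 (by exact_mod_cast h1)
  | succ n ih =>
    intro β h0 h1
    rcases le_or_gt β n with h | h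
    · exact ih β h0 h
    · have hβpos : 0 < β := lt_of_le_of_lt (Nat.cast_nonneg n) h
      obtain ⟨K, hK0, hK⟩ := ih (β-1) (by linarith) (by push_cast at h1 ⊢; linarith)
      set c : ℝ := 1 + β + β*2^(1-β) with hcdef
      have hc0 : (0:ℝ) ≤ c := by positivity
      refine ⟨c * K, by positivity, fun r h0r h1r => ?_⟩
      have ht0 : (0:ℝ) < 1 - r := by linarith
      have hstep := lemA_step hβpos h0r h1r
      have hK' := hK r h0r h1r
      have he : (1:ℝ) + (β-1) = β := by ring
      rw [he] at hK'
      have e1 : (1-r)^(1+β) = (1-r)^β * (1-r) := by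
        rw [add_comm, Real.rpow_add ht0, Real.rpow_one]
      have hb0 : (0:ℝ) ≤ (1-r)^β := Real.rpow_nonneg ht0.le β
      calc (1-r)^(1+β) * ∑' k : ℕ, ((k:ℝ)+1)^β * r^k
          = (1-r)^β * ((1-r) * ∑' k : ℕ, ((k:ℝ)+1)^β * r^k) := by rw [e1]; ring
        _ ≤ (1-r)^β * (c * ∑' k : ℕ, ((k:ℝ)+1)^(β-1) * r^k) :=
            mul_le_mul_of_nonneg_left hstep hb0
        _ = c * ((1-r)^β * ∑' k : ℕ, ((k:ℝ)+1)^(β-1) * r^k) := by ring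
        _ ≤ c * K := mul_le_mul_of_nonneg_left hK' hc0
private lemma choose_le_pow_nat (m k : ℕ) : (k+m).choose m ≤ (k+1)^m := by
  induction m with
  | zero => simp
  | succ m ih =>
    have hid := Nat.add_one_mul_choose_eq (k+m) m
    -- (k+m+1) * (k+m).choose m = (k+m+1).choose (m+1) * (m+1)
    have h1 : (k+(m+1)).choose (m+1) * (m+1) = (k+m+1) * ((k+m).choose m) := by
      rw [show k+(m+1) = (k+m)+1 from rfl]
      exact (Nat.add_one_mul_choose_eq (k+m) m).symm
    have h2 : (k+m+1) * ((k+m).choose m) ≤ ((k+1)*(m+1)) * (k+1)^m := by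
      apply Nat.mul_le_mul _ ih
      nlinarith
    have h3 : ((k+1)*(m+1)) * (k+1)^m = ((k+1)^(m+1)) * (m+1) := by ring
    refine Nat.le_of_mul_le_mul_right ?_ (Nat.succ_pos m)
    calc (k+(m+1)).choose (m+1) * (m+1) = (k+m+1) * ((k+m).choose m) := h1
      _ ≤ ((k+1)*(m+1)) * (k+1)^m := h2
      _ = (k+1)^(m+1) * (m+1) := h3
section OpAlg

variable {A : Type*} [NormedRing A] [NormedAlgebra ℂ A] [CompleteSpace A]

omit [NormedAlgebra ℂ A] [CompleteSpace A] in
private lemma tsum_telescope' {f : ℕ → A} (hf : Summable fun k => f k - f (k+1))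
    (h0 : Filter.Tendsto f Filter.atTop (nhds 0)) : ∑' k : ℕ, (f k - f (k+1)) = f 0 := by
  apply HasSum.tsum_eq
  rw [hf.hasSum_iff_tendsto_nat]
  have he : ∀ n : ℕ, ∑ i ∈ Finset.range n, (f i - f (i+1)) = f 0 - f n :=
    fun n => Finset.sum_range_sub' f n
  simp only [he]
  simpa using Filter.Tendsto.const_sub (f 0) h0

end OpAlg
section OpAlg2

variable {A : Type*} [NormedRing A] [NormedAlgebra ℂ A] [CompleteSpace A]

private lemma summable_co (n : ℕ) {x : A} {c r : ℝ} (h0 : 0 ≤ r) (h1 : r < 1)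
    (hx : ∀ k : ℕ, ‖x^k‖ ≤ c * r^k) :
    Summable fun k : ℕ => (((k+n).choose n : ℕ) : ℂ) • x^k := by
  have hc : (0:ℝ) ≤ c := le_trans (norm_nonneg (x^0)) (by simpa using hx 0)
  apply Summable.of_norm
  have hmaj : Summable fun k : ℕ => c * (((k:ℝ)+1)^n * r^k) :=
    (summable_natpow_geo n h0 h1).mul_left c
  refine hmaj.of_nonneg_of_le (fun k => norm_nonneg _) (fun k => ?_)
  rw [norm_smul, Complex.norm_natCast]
  have h3 : (((k+n).choose n : ℕ) : ℝ) ≤ ((k:ℝ)+1)^n := by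
    calc (((k+n).choose n : ℕ) : ℝ) ≤ (((k+1)^n : ℕ) : ℝ) := by
          exact_mod_cast choose_le_pow_nat n k
      _ = ((k:ℝ)+1)^n := by push_cast; ring
  calc (((k+n).choose n : ℕ) : ℝ) * ‖x^k‖ ≤ ((k:ℝ)+1)^n * (c * r^k) :=
        mul_le_mul h3 (hx k) (norm_nonneg _) (by positivity)
    _ = c * (((k:ℝ)+1)^n * r^k) := by ring

private lemma summable_co' (n : ℕ) {x : A} {c r : ℝ} (h0 : 0 ≤ r) (h1 : r < 1)
    (hx : ∀ k : ℕ, ‖x^k‖ ≤ c * r^k) :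
    Summable fun k : ℕ => (((k+n).choose n : ℕ) : ℂ) • x^(k+1) := by
  have hc : (0:ℝ) ≤ c := le_trans (norm_nonneg (x^0)) (by simpa using hx 0)
  apply Summable.of_norm
  have hmaj : Summable fun k : ℕ => c * (((k:ℝ)+1)^n * r^k) :=
    (summable_natpow_geo n h0 h1).mul_left c
  refine hmaj.of_nonneg_of_le (fun k => norm_nonneg _) (fun k => ?_)
  rw [norm_smul, Complex.norm_natCast]
  have h3 : (((k+n).choose n : ℕ) : ℝ) ≤ ((k:ℝ)+1)^n := by
    calc (((k+n).choose n : ℕ) : ℝ) ≤ (((k+1)^n : ℕ) : ℝ) := by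
          exact_mod_cast choose_le_pow_nat n k
      _ = ((k:ℝ)+1)^n := by push_cast; ring
  have h4 : ‖x^(k+1)‖ ≤ c * r^k := by
    calc ‖x^(k+1)‖ ≤ c * r^(k+1) := hx (k+1)
      _ ≤ c * r^k := by
          apply mul_le_mul_of_nonneg_left _ hc
          exact pow_le_pow_of_le_one h0 h1.le (Nat.le_succ k)
  calc (((k+n).choose n : ℕ) : ℝ) * ‖x^(k+1)‖ ≤ ((k:ℝ)+1)^n * (c * r^k) :=
        mul_le_mul h3 h4 (norm_nonneg _) (by positivity)
    _ = c * (((k:ℝ)+1)^n * r^k) := by ring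

private lemma inverse_pow_eq_tsum {x : A} {c r : ℝ} (h0 : 0 ≤ r) (h1 : r < 1)
    (hx : ∀ k : ℕ, ‖x^k‖ ≤ c * r^k) (m : ℕ) :
    (Ring.inverse (1 - x))^(m+1) = ∑' k : ℕ, (((k+m).choose m : ℕ) : ℂ) • x^k := by
  have hc : (0:ℝ) ≤ c := le_trans (norm_nonneg (x^0)) (by simpa using hx 0)
  have hx0 : Filter.Tendsto (fun k : ℕ => x^k) Filter.atTop (nhds 0) := by
    apply squeeze_zero_norm hx
    have := (tendsto_pow_atTop_nhds_zero_of_lt_one h0 h1).const_mul c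
    simpa using this
  have hS := fun n => summable_co n (x := x) h0 h1 hx
  have hS' := fun n => summable_co' n (x := x) h0 h1 hx
  -- (I) left multiplication
  have hL : ∀ n : ℕ, (1 - x) * (∑' k : ℕ, (((k+n).choose n : ℕ) : ℂ) • x^k)
      = ∑' k : ℕ, ((((k+n).choose n : ℕ) : ℂ) • x^k - (((k+n).choose n : ℕ) : ℂ) • x^(k+1)) := by
    intro n
    rw [← Summable.tsum_mul_left (1-x) (hS n)]
    refine tsum_congr fun k => ?_
    rw [mul_smul_comm, one_sub_mul, smul_sub, ← pow_succ']
  -- (II) right multiplication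
  have hR : ∀ n : ℕ, (∑' k : ℕ, (((k+n).choose n : ℕ) : ℂ) • x^k) * (1 - x)
      = ∑' k : ℕ, ((((k+n).choose n : ℕ) : ℂ) • x^k - (((k+n).choose n : ℕ) : ℂ) • x^(k+1)) := by
    intro n
    rw [← Summable.tsum_mul_right (1-x) (hS n)]
    refine tsum_congr fun k => ?_
    rw [smul_mul_assoc, mul_one_sub, smul_sub, ← pow_succ]
  -- (III) D 0 = 1
  have hD0 : ∑' k : ℕ, ((((k+0).choose 0 : ℕ) : ℂ) • x^k - (((k+0).choose 0 : ℕ) : ℂ) • x^(k+1))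
      = 1 := by
    have he : ∀ k : ℕ, (((k+0).choose 0 : ℕ) : ℂ) • x^k - (((k+0).choose 0 : ℕ) : ℂ) • x^(k+1)
        = x^k - x^(k+1) := by
      intro k; simp
    rw [tsum_congr he]
    have hsum : Summable fun k : ℕ => x^k - x^(k+1) := by
      have h1' := hS 0
      have h2' := hS' 0
      simp only [Nat.choose_zero_right, Nat.cast_one, one_smul] at h1' h2'
      exact h1'.sub h2'
    rw [tsum_telescope' hsum hx0, pow_zero]
  -- (IV) D (n+1) = S n
  have hDsucc : ∀ n : ℕ,
      ∑' k : ℕ, ((((k+(n+1)).choose (n+1) : ℕ) : ℂ) • x^k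
        - (((k+(n+1)).choose (n+1) : ℕ) : ℂ) • x^(k+1))
      = ∑' k : ℕ, (((k+n).choose n : ℕ) : ℂ) • x^k := by
    intro n
    set u : ℕ → A := fun k => match k with
      | 0 => 0
      | j+1 => (((j+(n+1)).choose (n+1) : ℕ) : ℂ) • x^(j+1) with hu_def
    have hu : Summable u := by
      apply (summable_nat_add_iff 1).mp
      exact hS' (n+1)
    have hshift : ∑' k : ℕ, (((k+(n+1)).choose (n+1) : ℕ) : ℂ) • x^(k+1) = ∑' k : ℕ, u k := by
      rw [Summable.tsum_eq_zero_add hu]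
      simp [hu_def]
    have hstep : ∑' k : ℕ, ((((k+(n+1)).choose (n+1) : ℕ) : ℂ) • x^k
        - (((k+(n+1)).choose (n+1) : ℕ) : ℂ) • x^(k+1))
        = ∑' k : ℕ, ((((k+(n+1)).choose (n+1) : ℕ) : ℂ) • x^k - u k) := by
      rw [Summable.tsum_sub (hS (n+1)) (hS' (n+1)), hshift, ← Summable.tsum_sub (hS (n+1)) hu]
    rw [hstep]
    refine tsum_congr fun k => ?_
    cases k with
    | zero => simp [hu_def]
    | succ j =>
      have hnat : (j+1+(n+1)).choose (n+1) = (j+1+n).choose n + (j+(n+1)).choose (n+1) := by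
        have h := Nat.choose_succ_succ (j+n+1) n
        rw [show j+1+(n+1) = j+n+1+1 from by omega, show j+1+n = j+n+1 from by omega,
          show j+(n+1) = j+n+1 from by omega]
        exact h
      have hcast : (((j+1+(n+1)).choose (n+1) : ℕ) : ℂ)
          = (((j+1+n).choose n : ℕ) : ℂ) + (((j+(n+1)).choose (n+1) : ℕ) : ℂ) := by
        exact_mod_cast congrArg (Nat.cast : ℕ → ℂ) hnat
      show (((j+1+(n+1)).choose (n+1) : ℕ) : ℂ) • x^(j+1)
          - (((j+(n+1)).choose (n+1) : ℕ) : ℂ) • x^(j+1) = (((j+1+n).choose n : ℕ) : ℂ) • x^(j+1)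
      rw [← sub_smul, hcast]
      congr 1
      ring
  -- combine: (1-x)^(n+1) is a two-sided inverse of S n
  have key : ∀ n : ℕ, (1-x)^(n+1) * (∑' k : ℕ, (((k+n).choose n : ℕ) : ℂ) • x^k) = 1
      ∧ (∑' k : ℕ, (((k+n).choose n : ℕ) : ℂ) • x^k) * (1-x)^(n+1) = 1 := by
    intro n
    induction n with
    | zero =>
      constructor
      · rw [pow_one, hL 0, hD0]
      · rw [pow_one, hR 0, hD0]
    | succ n ih =>
      constructor
      · rw [pow_succ, mul_assoc, hL (n+1), hDsucc n, ih.1]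
      · rw [pow_succ', ← mul_assoc, hR (n+1), hDsucc n, ih.2]
  rw [Ring.inverse_pow]
  let v : Aˣ := ⟨(1-x)^(m+1), ∑' k : ℕ, (((k+m).choose m : ℕ) : ℂ) • x^k, (key m).1, (key m).2⟩
  have hv : (1-x)^(m+1) = (v : A) := rfl
  rw [hv, Ring.inverse_unit v]
  exact Units.inv_eq_of_mul_eq_one_right (key m).1

end OpAlg2
private lemma tsum_cs {a b : ℕ → ℝ} (ha : ∀ k, 0 ≤ a k) (hb : ∀ k, 0 ≤ b k)
    (hA : Summable fun k => a k ^ 2) (hB : Summable fun k => b k ^ 2) :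
    Summable (fun k => a k * b k) ∧
      ∑' k : ℕ, a k * b k ≤ Real.sqrt (∑' k : ℕ, a k ^ 2) * Real.sqrt (∑' k : ℕ, b k ^ 2) := by
  have hsum : Summable fun k => a k * b k := by
    refine (hA.add hB).of_nonneg_of_le (fun k => mul_nonneg (ha k) (hb k)) (fun k => ?_)
    nlinarith [sq_nonneg (a k - b k), mul_nonneg (ha k) (hb k)]
  refine ⟨hsum, Summable.tsum_le_of_sum_le hsum fun s => ?_⟩
  have h1 : (∑ i ∈ s, a i * b i)^2 ≤ (∑ i ∈ s, a i^2) * (∑ i ∈ s, b i^2) :=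
    Finset.sum_mul_sq_le_sq_mul_sq s a b
  have h2 : ∑ i ∈ s, a i^2 ≤ ∑' k : ℕ, a k^2 := Summable.sum_le_tsum s (fun i _ => sq_nonneg _) hA
  have h3 : ∑ i ∈ s, b i^2 ≤ ∑' k : ℕ, b k^2 := Summable.sum_le_tsum s (fun i _ => sq_nonneg _) hB
  have h4 : (0:ℝ) ≤ ∑ i ∈ s, a i * b i := Finset.sum_nonneg fun i _ => mul_nonneg (ha i) (hb i)
  have h5 : ∑ i ∈ s, a i * b i = Real.sqrt ((∑ i ∈ s, a i * b i)^2) := (Real.sqrt_sq h4).symm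
  rw [h5]
  calc Real.sqrt ((∑ i ∈ s, a i*b i)^2)
      ≤ Real.sqrt ((∑' k : ℕ, a k^2) * (∑' k : ℕ, b k^2)) := by
        apply Real.sqrt_le_sqrt
        calc (∑ i ∈ s, a i*b i)^2 ≤ (∑ i ∈ s, a i^2) * (∑ i ∈ s, b i^2) := h1
          _ ≤ (∑' k : ℕ, a k^2) * (∑' k : ℕ, b k^2) :=
              mul_le_mul h2 h3 (Finset.sum_nonneg fun i _ => sq_nonneg _)
                (tsum_nonneg fun k => sq_nonneg _)
    _ = Real.sqrt (∑' k : ℕ, a k^2) * Real.sqrt (∑' k : ℕ, b k^2) :=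
        Real.sqrt_mul (tsum_nonneg fun k => sq_nonneg _) _
/-- If C is α-admissible for the power bounded operator T on a Hilbert space, and
m = (α+β)/2 is a nonnegative integer, then there is K ≥ 0 with
(1-|ω|²)^((1+β)/2) ‖C (I - ωT)^{-(m+1)}‖ ≤ K for all ω in the open unit disc. -/
theorem stmt4 {X Y : Type*}
    [NormedAddCommGroup X] [InnerProductSpace ℂ X] [CompleteSpace X]
    [NormedAddCommGroup Y] [InnerProductSpace ℂ Y] [CompleteSpace Y]
    (T : X →L[ℂ] X) (c₀ : ℝ) (hT : ∀ k : ℕ, ‖T ^ k‖ ≤ c₀)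
    (C : X →L[ℂ] Y) (α β : ℝ) (hα : α > -1) (hβ : β > -1)
    (m : ℕ) (hm : (α + β) / 2 = (m : ℝ))
    (M : ℝ) (hM : 0 ≤ M)
    (hsum : ∀ x : X, Summable (fun k : ℕ => ((k : ℝ) + 1) ^ α * ‖C (T ^ k <| x)‖ ^ 2))
    (hadm : ∀ x : X, (∑' k : ℕ, ((k : ℝ) + 1) ^ α * ‖C (T ^ k <| x)‖ ^ 2) ≤ M ^ 2 * ‖x‖ ^ 2) :
    ∃ K : ℝ, 0 ≤ K ∧ ∀ ω : ℂ, ‖ω‖ < 1 →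
      (1 - ‖ω‖ ^ 2) ^ ((1 + β) / 2) * ‖C.comp ((Ring.inverse (1 - ω • T)) ^ (m + 1))‖ ≤ K := by
  obtain ⟨KA, hKA0, hKA⟩ := lemA hβ
  refine ⟨M * Real.sqrt KA, by positivity, fun ω hω => ?_⟩
  have hr0 : (0:ℝ) ≤ ‖ω‖ := norm_nonneg ω
  set r : ℝ := ‖ω‖ with hrdef
  have hs0 : (0:ℝ) ≤ r^2 := sq_nonneg r
  have hs1 : r^2 < 1 := by nlinarith
  have h1s : (0:ℝ) < 1 - r^2 := by linarith
  set x : X →L[ℂ] X := ω • T with hxdef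
  have hx : ∀ k : ℕ, ‖x^k‖ ≤ c₀ * r^k := by
    intro k
    rw [hxdef, smul_pow, norm_smul, norm_pow]
    calc r^k * ‖T^k‖ ≤ r^k * c₀ :=
          mul_le_mul_of_nonneg_left (hT k) (pow_nonneg hr0 k)
      _ = c₀ * r^k := mul_comm _ _
  rw [inverse_pow_eq_tsum hr0 hω hx m]
  -- the series bound Σa
  have hSgeo : Summable fun k : ℕ => ((k:ℝ)+1)^β * (r^2)^k := summable_rpow_geo β hs0 hs1
  have hSnn2 : (0:ℝ) ≤ ∑' k : ℕ, ((k:ℝ)+1)^β * (r^2)^k :=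
    tsum_nonneg fun k => mul_nonneg (Real.rpow_nonneg (by positivity) β) (pow_nonneg hs0 k)
  have hSbd : ∑' k : ℕ, ((k:ℝ)+1)^β * (r^2)^k ≤ KA * (1-r^2)^(-(1+β)) := by
    have h := hKA (r^2) hs0 hs1
    have hpos : (0:ℝ) < (1-r^2)^(1+β) := Real.rpow_pos_of_pos h1s _
    have h2 := mul_le_mul_of_nonneg_right h (inv_nonneg.mpr hpos.le)
    rw [mul_comm ((1-r^2)^(1+β)) _, mul_assoc, mul_inv_cancel₀ hpos.ne', mul_one] at h2
    rwa [Real.rpow_neg h1s.le]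
  -- per-vector bound
  have hnorm : ∀ y : X,
      ‖(C.comp (∑' k : ℕ, (((k+m).choose m : ℕ) : ℂ) • x^k)) y‖
        ≤ Real.sqrt (∑' k : ℕ, ((k:ℝ)+1)^β * (r^2)^k) * M * ‖y‖ := by
    intro y
    set aa : ℕ → ℝ := fun k => (((k+m).choose m : ℕ) : ℝ) * r^k * ((k:ℝ)+1)^(-(α/2)) with haa
    set bb : ℕ → ℝ := fun k => ((k:ℝ)+1)^(α/2) * ‖C ((T^k) y)‖ with hbb
    have haa0 : ∀ k, 0 ≤ aa k := fun k => by
      rw [haa]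
      have : (0:ℝ) ≤ ((k:ℝ)+1)^(-(α/2)) := Real.rpow_nonneg (by positivity) _
      positivity
    have hbb0 : ∀ k, 0 ≤ bb k := fun k => by
      rw [hbb]
      have : (0:ℝ) ≤ ((k:ℝ)+1)^(α/2) := Real.rpow_nonneg (by positivity) _
      positivity
    -- squares
    have haasq : ∀ k, aa k ^ 2 ≤ ((k:ℝ)+1)^β * (r^2)^k := by
      intro k
      have hb1 : (0:ℝ) < (k:ℝ)+1 := by positivity
      have e1 : (((k:ℝ)+1)^(-(α/2)))^2 = ((k:ℝ)+1)^(-α) := by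
        rw [← Real.rpow_natCast (((k:ℝ)+1)^(-(α/2))) 2, ← Real.rpow_mul hb1.le]
        norm_num
      have e2 : (r^k)^2 = (r^2)^k := by
        rw [← pow_mul, ← pow_mul, mul_comm]
      have e3 : aa k ^ 2
          = ((((k+m).choose m : ℕ) : ℝ))^2 * ((k:ℝ)+1)^(-α) * (r^2)^k := by
        rw [haa]; rw [mul_pow, mul_pow, e1, e2]; ring
      have hch : (((k+m).choose m : ℕ) : ℝ) ≤ ((k:ℝ)+1)^m := by
        calc (((k+m).choose m : ℕ) : ℝ) ≤ (((k+1)^m : ℕ) : ℝ) := by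
              exact_mod_cast choose_le_pow_nat m k
          _ = ((k:ℝ)+1)^m := by push_cast; ring
      have hch2 : ((((k+m).choose m : ℕ) : ℝ))^2 ≤ (((k:ℝ)+1)^m)^2 := by
        apply pow_le_pow_left₀ (Nat.cast_nonneg _) hch
      have e4 : (((k:ℝ)+1)^m)^2 * ((k:ℝ)+1)^(-α) = ((k:ℝ)+1)^β := by
        rw [← pow_mul, ← Real.rpow_natCast ((k:ℝ)+1) (m*2), ← Real.rpow_add hb1]
        congr 1
        push_cast
        linarith [hm]
      calc aa k ^ 2 = ((((k+m).choose m : ℕ) : ℝ))^2 * ((k:ℝ)+1)^(-α) * (r^2)^k := e3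
        _ ≤ (((k:ℝ)+1)^m)^2 * ((k:ℝ)+1)^(-α) * (r^2)^k := by
            apply mul_le_mul_of_nonneg_right _ (pow_nonneg hs0 k)
            exact mul_le_mul_of_nonneg_right hch2 (Real.rpow_nonneg hb1.le _)
        _ = ((k:ℝ)+1)^β * (r^2)^k := by rw [e4]
    have hA : Summable fun k => aa k ^ 2 :=
      hSgeo.of_nonneg_of_le (fun k => sq_nonneg _) haasq
    have hbbsq : (fun k => bb k ^ 2) = fun k : ℕ => ((k:ℝ)+1)^α * ‖C ((T^k) y)‖^2 := by
      funext k
      have hb1 : (0:ℝ) < (k:ℝ)+1 := by positivity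
      rw [hbb, mul_pow]
      congr 1
      rw [← Real.rpow_natCast (((k:ℝ)+1)^(α/2)) 2, ← Real.rpow_mul hb1.le]
      norm_num
    have hB : Summable fun k => bb k ^ 2 := by rw [hbbsq]; exact hsum y
    obtain ⟨hab_sum, hab_le⟩ := tsum_cs haa0 hbb0 hA hB
    -- the evaluated series
    have hSsum := summable_co m hr0 hω hx
    have hHS1 := hSsum.hasSum.mapL (ContinuousLinearMap.apply ℂ X y)
    simp only [ContinuousLinearMap.apply_apply] at hHS1
    have hHS2 := hHS1.mapL C
    have hterm : ∀ k : ℕ, ‖C (((((k+m).choose m : ℕ) : ℂ) • x^k) y)‖ = aa k * bb k := by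
      intro k
      rw [ContinuousLinearMap.smul_apply, hxdef, smul_pow, ContinuousLinearMap.smul_apply,
        map_smul, map_smul, norm_smul, norm_smul, Complex.norm_natCast, norm_pow]
      have hone : ((k:ℝ)+1)^(-(α/2)) * ((k:ℝ)+1)^(α/2) = 1 := by
        rw [← Real.rpow_add (by positivity)]; norm_num
      rw [haa, hbb]
      calc (((k+m).choose m : ℕ) : ℝ) * (‖ω‖^k * ‖C ((T^k) y)‖)
          = ((((k+m).choose m : ℕ) : ℝ) * r^k * ‖C ((T^k) y)‖)
            * (((k:ℝ)+1)^(-(α/2)) * ((k:ℝ)+1)^(α/2)) := by rw [hone, mul_one, ← hrdef]; ring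
        _ = (((k+m).choose m : ℕ) : ℝ) * r^k * ((k:ℝ)+1)^(-(α/2))
            * (((k:ℝ)+1)^(α/2) * ‖C ((T^k) y)‖) := by ring
    have hnorm_sum : Summable fun k : ℕ => ‖C (((((k+m).choose m : ℕ) : ℂ) • x^k) y)‖ := by
      rw [show (fun k : ℕ => ‖C (((((k+m).choose m : ℕ) : ℂ) • x^k) y)‖)
        = fun k => aa k * bb k from funext hterm]
      exact hab_sum
    have hb2 : ∑' k : ℕ, bb k ^ 2 ≤ (M * ‖y‖)^2 := by
      rw [hbbsq]
      calc ∑' k : ℕ, ((k:ℝ)+1)^α * ‖C ((T^k) y)‖^2 ≤ M^2 * ‖y‖^2 := hadm y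
        _ = (M * ‖y‖)^2 := by ring
    have hsqb : Real.sqrt (∑' k : ℕ, bb k ^ 2) ≤ M * ‖y‖ := by
      calc Real.sqrt (∑' k : ℕ, bb k ^ 2) ≤ Real.sqrt ((M * ‖y‖)^2) := Real.sqrt_le_sqrt hb2
        _ = M * ‖y‖ := Real.sqrt_sq (by positivity)
    have hsqa : Real.sqrt (∑' k : ℕ, aa k ^ 2)
        ≤ Real.sqrt (∑' k : ℕ, ((k:ℝ)+1)^β * (r^2)^k) :=
      Real.sqrt_le_sqrt (Summable.tsum_le_tsum haasq hA hSgeo)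
    calc ‖(C.comp (∑' k : ℕ, (((k+m).choose m : ℕ) : ℂ) • x^k)) y‖
        = ‖∑' k : ℕ, C (((((k+m).choose m : ℕ) : ℂ) • x^k) y)‖ := by
          rw [ContinuousLinearMap.comp_apply, ← hHS2.tsum_eq]
      _ ≤ ∑' k : ℕ, ‖C (((((k+m).choose m : ℕ) : ℂ) • x^k) y)‖ :=
          norm_tsum_le_tsum_norm hnorm_sum
      _ = ∑' k : ℕ, aa k * bb k := tsum_congr hterm
      _ ≤ Real.sqrt (∑' k : ℕ, aa k ^ 2) * Real.sqrt (∑' k : ℕ, bb k ^ 2) := hab_le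
      _ ≤ Real.sqrt (∑' k : ℕ, ((k:ℝ)+1)^β * (r^2)^k) * (M * ‖y‖) := by
          apply mul_le_mul hsqa hsqb (Real.sqrt_nonneg _) (Real.sqrt_nonneg _)
      _ = Real.sqrt (∑' k : ℕ, ((k:ℝ)+1)^β * (r^2)^k) * M * ‖y‖ := by ring
  have hopn : ‖C.comp (∑' k : ℕ, (((k+m).choose m : ℕ) : ℂ) • x^k)‖
      ≤ Real.sqrt (∑' k : ℕ, ((k:ℝ)+1)^β * (r^2)^k) * M :=
    ContinuousLinearMap.opNorm_le_bound _ (by positivity) hnorm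
  -- final combination
  have hsqS : Real.sqrt (∑' k : ℕ, ((k:ℝ)+1)^β * (r^2)^k)
      ≤ Real.sqrt KA * (1-r^2)^(-((1+β)/2)) := by
    calc Real.sqrt (∑' k : ℕ, ((k:ℝ)+1)^β * (r^2)^k)
        ≤ Real.sqrt (KA * (1-r^2)^(-(1+β))) := Real.sqrt_le_sqrt hSbd
      _ = Real.sqrt KA * Real.sqrt ((1-r^2)^(-(1+β))) := Real.sqrt_mul hKA0 _
      _ = Real.sqrt KA * (1-r^2)^(-((1+β)/2)) := by
          congr 1
          rw [Real.sqrt_eq_rpow, ← Real.rpow_mul h1s.le]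
          congr 1
          ring
  have hcancel : (1-r^2)^((1+β)/2) * (1-r^2)^(-((1+β)/2)) = 1 := by
    rw [← Real.rpow_add h1s]
    norm_num
  have hp2nn : (0:ℝ) ≤ (1-r^2)^((1+β)/2) := Real.rpow_nonneg h1s.le _
  calc (1-r^2)^((1+β)/2) * ‖C.comp (∑' k : ℕ, (((k+m).choose m : ℕ) : ℂ) • x^k)‖
      ≤ (1-r^2)^((1+β)/2) * (Real.sqrt (∑' k : ℕ, ((k:ℝ)+1)^β * (r^2)^k) * M) :=
        mul_le_mul_of_nonneg_left hopn hp2nn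
    _ ≤ (1-r^2)^((1+β)/2) * (Real.sqrt KA * (1-r^2)^(-((1+β)/2)) * M) := by
        apply mul_le_mul_of_nonneg_left _ hp2nn
        exact mul_le_mul_of_nonneg_right hsqS hM
    _ = M * Real.sqrt KA * ((1-r^2)^((1+β)/2) * (1-r^2)^(-((1+β)/2))) := by ring
    _ = M * Real.sqrt KA := by rw [hcancel, mul_one]
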